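/- Let G be a finite graph and v ∈ V(G) a vertex such that V(G) \ {v} is a maximal cluster set of G. Then G has at most c + 2 maximal cluster sets, where c is the number of connected components of G − v. -/
import Mathlib


/-- `S` is a cluster set of `G`: the induced subgraph `G[S]` is a cluster graph, i.e. it
has no induced path on three vertices. -/
def IsClusterSet {V : Type} (G : SimpleGraph V) (S : Set V) : Prop :=
  ∀ a ∈ S, ∀ b ∈ S, ∀ c ∈ S, G.Adj a b → G.Adj b c → a ≠ c → G.Adj a c

/-- `S` is a maximal cluster set of `G`. -/
def IsMaxClusterSet {V : Type} (G : SimpleGraph V) (S : Set V) : Prop :=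
  IsClusterSet G S ∧ ∀ T : Set V, S ⊂ T → ¬ IsClusterSet G T

lemma reach_adj {V : Type} (G : SimpleGraph V) (v : V)
    (hcl : IsClusterSet G (({v} : Set V)ᶜ)) (x y : (({v} : Set V)ᶜ : Set V))
    (hr : (G.induce (({v} : Set V)ᶜ)).Reachable x y) : x = y ∨ G.Adj x.1 y.1 := by
  obtain ⟨w⟩ := hr
  induction w with
  | nil => exact Or.inl rfl
  | @cons a b c hab w ih =>
    have hab' : G.Adj a.1 b.1 := hab
    rcases ih with rfl | hby
    · exact Or.inr hab'
    · by_cases hac : a = c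
      · exact Or.inl hac
      · exact Or.inr (hcl a.1 a.2 b.1 b.2 c.1 c.2 hab' hby
          (fun hv => hac (Subtype.ext hv)))

theorem card_maxClusterSets_of_almost_cluster
    {V : Type} [Fintype V] (G : SimpleGraph V) (v : V)
    (h : IsMaxClusterSet G (({v} : Set V)ᶜ)) :
    {S : Set V | IsMaxClusterSet G S}.ncard ≤
      Nat.card (G.induce (({v} : Set V)ᶜ)).ConnectedComponent + 2 := by
  classical
  set H := G.induce (({v} : Set V)ᶜ) with hH
  have hcl : IsClusterSet G (({v} : Set V)ᶜ) := h.1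
  -- cluster set without neighbors of v
  set S0 : Set V := {x | ¬ G.Adj v x} with hS0
  -- for each component i, the candidate maximal cluster set containing v with
  -- neighbors of v in component i
  set Sfun : H.ConnectedComponent → Set V := fun i =>
    insert v {x | ∃ hx : x ∈ (({v} : Set V)ᶜ),
      (G.Adj v x ↔ H.connectedComponentMk ⟨x, hx⟩ = i)} with hSfun
  have hv0 : v ∈ S0 := by simp [hS0]
  -- S0 is a cluster set
  have hS0cl : IsClusterSet G S0 := by
    intro a ha b hb c hc hab hbc hac
    have hav : a ≠ v := by rintro rfl; exact hb hab
    have hbv : b ≠ v := by rintro rfl; exact hc hbc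
    have hcv : c ≠ v := by rintro rfl; exact hb hbc.symm
    exact hcl a (by simpa using hav) b (by simpa using hbv) c (by simpa using hcv)
      hab hbc hac
  -- each Sfun i is a cluster set
  have hSicl : ∀ i, IsClusterSet G (Sfun i) := by
    intro i a ha b hb c hc hab hbc hac
    have memadj : ∀ x, x ∈ Sfun i → x ≠ v → ∀ hx : x ∈ (({v} : Set V)ᶜ),
        (G.Adj v x ↔ H.connectedComponentMk ⟨x, hx⟩ = i) := by
      intro x hxS hxv hx
      rcases hxS with rfl | ⟨hx', hiff⟩
      · exact absurd rfl hxv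
      · exact hiff
    by_cases hbv : b = v
    · have hab2 : G.Adj a v := hbv ▸ hab
      have hbc2 : G.Adj v c := hbv ▸ hbc
      have hav : a ≠ v := fun hh => G.irrefl (hh ▸ hab2)
      have hcv : c ≠ v := fun hh => G.irrefl (hh ▸ hbc2)
      have ha' : a ∈ (({v} : Set V)ᶜ) := by simpa using hav
      have hc' : c ∈ (({v} : Set V)ᶜ) := by simpa using hcv
      have hia := (memadj a ha hav ha').mp hab2.symm
      have hic := (memadj c hc hcv hc').mp hbc2
      have hreach : H.Reachable ⟨a, ha'⟩ ⟨c, hc'⟩ :=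
        (SimpleGraph.ConnectedComponent.eq).mp (hia.trans hic.symm)
      rcases reach_adj G v hcl _ _ hreach with heq | hadj
      · exact absurd (congrArg Subtype.val heq) hac
      · exact hadj
    · by_cases hav : a = v
      · have hab2 : G.Adj v b := hav ▸ hab
        have hbv' : b ≠ v := hbv
        have hb' : b ∈ (({v} : Set V)ᶜ) := by simpa using hbv'
        have hib := (memadj b hb hbv' hb').mp hab2
        have hcv : c ≠ v := fun hh => hac (hav.trans hh.symm)
        have hc' : c ∈ (({v} : Set V)ᶜ) := by simpa using hcv
        have hadjH : H.Adj ⟨b, hb'⟩ ⟨c, hc'⟩ := hbc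
        have hic : H.connectedComponentMk ⟨c, hc'⟩ = i := by
          rw [← hib]
          exact (SimpleGraph.ConnectedComponent.eq).mpr hadjH.symm.reachable
        have : G.Adj v c := (memadj c hc hcv hc').mpr hic
        exact hav ▸ this
      · by_cases hcv : c = v
        · have hbc2 : G.Adj b v := hcv ▸ hbc
          have ha' : a ∈ (({v} : Set V)ᶜ) := by simpa using hav
          have hbv' : b ≠ v := hbv
          have hb' : b ∈ (({v} : Set V)ᶜ) := by simpa using hbv'
          have hib := (memadj b hb hbv' hb').mp hbc2.symm
          have hadjH : H.Adj ⟨a, ha'⟩ ⟨b, hb'⟩ := hab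
          have hia : H.connectedComponentMk ⟨a, ha'⟩ = i := by
            rw [← hib]
            exact (SimpleGraph.ConnectedComponent.eq).mpr hadjH.reachable
          have : G.Adj v a := (memadj a ha hav ha').mpr hia
          exact hcv ▸ this.symm
        · exact hcl a (by simpa using hav) b (by simpa using hbv)
            c (by simpa using hcv) hab hbc hac
  -- every maximal cluster set is one of the candidates
  have hsub : {S : Set V | IsMaxClusterSet G S} ⊆
      insert (({v} : Set V)ᶜ) (insert S0 (Set.range Sfun)) := by
    intro S hS
    obtain ⟨hScl, hSmax⟩ := hS
    by_cases hvS : v ∈ S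
    · by_cases hN : ∃ a ∈ S, G.Adj v a
      · -- S ⊆ Sfun i for the component i of a neighbor of v in S
        obtain ⟨a, haS, hva⟩ := hN
        have hav : a ≠ v := fun hh => G.irrefl (hh ▸ hva)
        have ha' : a ∈ (({v} : Set V)ᶜ) := by simpa using hav
        set i := H.connectedComponentMk ⟨a, ha'⟩ with hi
        have hSsub : S ⊆ Sfun i := by
          intro x hxS
          by_cases hxv : x = v
          · exact hxv ▸ Set.mem_insert v _
          · have hx' : x ∈ (({v} : Set V)ᶜ) := by simpa using hxv
            refine Set.mem_insert_of_mem _ ⟨hx', ?_⟩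
            constructor
            · intro hvx
              by_cases hxa : x = a
              · rw [hi]
                exact SimpleGraph.ConnectedComponent.sound
                  (by rw [show (⟨x, hx'⟩ : (({v} : Set V)ᶜ : Set V)) = ⟨a, ha'⟩ from
                    Subtype.ext hxa])
              · have hax : G.Adj a x :=
                  hScl a haS v hvS x hxS hva.symm hvx (fun hh => hxa hh.symm)
                have hadjH : H.Adj ⟨x, hx'⟩ ⟨a, ha'⟩ := hax.symm
                rw [hi]
                exact SimpleGraph.ConnectedComponent.sound hadjH.reachable
            · intro hix
              have hreach : H.Reachable ⟨x, hx'⟩ ⟨a, ha'⟩ :=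
                (SimpleGraph.ConnectedComponent.eq).mp (hix.trans rfl)
              rcases reach_adj G v hcl _ _ hreach with heq | hadj
              · have : x = a := congrArg Subtype.val heq
                exact this ▸ hva
              · exact hScl v hvS a haS x hxS hva hadj.symm (Ne.symm hxv)
        have : S = Sfun i := by
          by_contra hne
          exact hSmax (Sfun i) (Set.ssubset_iff_subset_ne.mpr ⟨hSsub, hne⟩) (hSicl i)
        rw [Set.mem_setOf_eq] at *
        rw [this]
        exact Set.mem_insert_of_mem _ (Set.mem_insert_of_mem _ ⟨i, rfl⟩)
      · -- S ⊆ S0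
        push_neg at hN
        have hSsub : S ⊆ S0 := fun x hx => hN x hx
        have : S = S0 := by
          by_contra hne
          exact hSmax S0 (Set.ssubset_iff_subset_ne.mpr ⟨hSsub, hne⟩) hS0cl
        rw [this]
        exact Set.mem_insert_of_mem _ (Set.mem_insert _ _)
    · have hSsub : S ⊆ (({v} : Set V)ᶜ) := by
        intro x hx
        simp only [Set.mem_compl_iff, Set.mem_singleton_iff]
        rintro rfl; exact hvS hx
      have : S = (({v} : Set V)ᶜ) := by
        by_contra hne
        exact hSmax _ (Set.ssubset_iff_subset_ne.mpr ⟨hSsub, hne⟩) hcl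
      rw [this]
      exact Set.mem_insert _ _
  calc {S : Set V | IsMaxClusterSet G S}.ncard
      ≤ (insert (({v} : Set V)ᶜ) (insert S0 (Set.range Sfun))).ncard :=
        Set.ncard_le_ncard hsub (Set.toFinite _)
    _ ≤ (insert S0 (Set.range Sfun)).ncard + 1 := Set.ncard_insert_le _ _
    _ ≤ ((Set.range Sfun).ncard + 1) + 1 := by
        have := Set.ncard_insert_le S0 (Set.range Sfun)
        omega
    _ ≤ Nat.card H.ConnectedComponent + 2 := by
        have h1 : (Set.range Sfun).ncard ≤ Nat.card H.ConnectedComponent := by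
          rw [← Nat.card_coe_set_eq]
          exact Finite.card_range_le Sfun
        omega
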